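/- For a join of an empty graph on p vertices with a complete graph on n−p vertices, where 2p+3 < n, the independence number equals p and is strictly less than (n−3)/2, which is strictly less than the annihilation number a(G); in particular α(G) < a(G). -/

import Mathlib

open Finset

namespace DSI

variable {V : Type*} (G : SimpleGraph V) [Fintype V] [DecidableEq V] [DecidableRel G.Adj]

/-- The degree sequence of `G`, sorted in non-decreasing order. -/
def dseq : List ℕ := (Finset.univ.val.map (fun v => G.degree v)).sort (· ≤ ·)

/-- The sum of the `k` smallest degrees, `Σ_{i=1}^k d_i`. -/
def sumSmallest (k : ℕ) : ℕ := ((dseq G).take k).sum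

/-- The sum of the `k` largest degrees, `Σ_{i=1}^k d_{n-i+1}`. -/
def sumLargest (k : ℕ) : ℕ := ((dseq G).reverse.take k).sum

/-- The number of edges `m(G)`. -/
def esize : ℕ := G.edgeFinset.card

/-- `m[S]`: the number of edges of the subgraph induced by `S`. -/
def mOn (S : Finset V) : ℕ := (S.sym2.filter (fun e => e ∈ G.edgeSet)).card

/-- A set `I` is `j`-independent if every vertex of `I` has fewer than `j` neighbours in `I`,
i.e. the induced subgraph has maximum degree `< j`. -/
def JIndep (j : ℕ) (I : Finset V) : Prop := ∀ v ∈ I, (I.filter (G.Adj v)).card < j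

/-- The `j`-independence number `α_j(G)`. -/
noncomputable def alphaJ (j : ℕ) : ℕ := sSup {k | ∃ I : Finset V, JIndep G j I ∧ I.card = k}

/-- The family `F` of maximum `j`-independent sets. -/
noncomputable def maxJIndep (j : ℕ) : Set (Finset V) :=
  {S | JIndep G j S ∧ S.card = alphaJ G j}

/-- `max_{S ∈ F} (m[V−S] − m[S])`. -/
noncomputable def fU (j : ℕ) : ℤ :=
  sSup ((fun S : Finset V => (mOn G Sᶜ : ℤ) - (mOn G S : ℤ)) '' maxJIndep G j)

/-- `min_{S ∈ F} (m[V−S] − m[S])`. -/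
noncomputable def fL (j : ℕ) : ℤ :=
  sInf ((fun S : Finset V => (mOn G Sᶜ : ℤ) - (mOn G S : ℤ)) '' maxJIndep G j)

/-- The upper `j`-annihilation number `a_j(G)`. -/
noncomputable def aJ (j : ℕ) : ℕ :=
  sSup {k | k ≤ Fintype.card V ∧ (sumSmallest G k : ℤ) + fU G j ≤ (esize G : ℤ)}

/-- The lower `j`-annihilation number `c_j(G)`. -/
noncomputable def cJ (j : ℕ) : ℕ :=
  sInf {k | k ≤ Fintype.card V ∧ (esize G : ℤ) ≤ (sumLargest G k : ℤ) + fL G j}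

/-- The annihilation number `a(G)`. -/
noncomputable def annihilation : ℕ :=
  sSup {k | k ≤ Fintype.card V ∧ sumSmallest G k ≤ esize G}

/-- An independent set. -/
def IndepSet (I : Finset V) : Prop := ∀ v ∈ I, ∀ w ∈ I, ¬ G.Adj v w

/-- The independence number `α(G)`. -/
noncomputable def alpha : ℕ := sSup {k | ∃ I : Finset V, IndepSet G I ∧ I.card = k}

end DSI
/-- The join `E_p + K_{n-p}` on vertex set `Fin n`: the first `p` vertices form an
empty graph, the remaining `n - p` a complete graph, and all edges in between. -/
def joinEK (p n : ℕ) : SimpleGraph (Fin n) :=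
  SimpleGraph.fromRel (fun v w => p ≤ v.val ∨ p ≤ w.val)

instance (p n : ℕ) : DecidableRel (joinEK p n).Adj := fun v w =>
  decidable_of_iff _ (SimpleGraph.fromRel_adj _ v w).symm

lemma joinEK_adj (p n : ℕ) (v w : Fin n) :
    (joinEK p n).Adj v w ↔ v ≠ w ∧ (p ≤ v.val ∨ p ≤ w.val) := by
  rw [joinEK, SimpleGraph.fromRel_adj]; tauto

lemma card_filter_lt (p n : ℕ) (hpn : p ≤ n) :
    ((univ : Finset (Fin n)).filter (fun v => v.val < p)).card = p := by
  rw [← Finset.card_range p]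
  apply Finset.card_bij (fun v _ => v.val)
  · intro a ha; simp at ha ⊢; exact ha
  · intro a _ b _ hab; exact Fin.ext hab
  · intro b hb; simp at hb; exact ⟨⟨b, lt_of_lt_of_le hb hpn⟩, by simp [hb], rfl⟩

lemma card_filter_ge (p n : ℕ) (hpn : p ≤ n) :
    ((univ : Finset (Fin n)).filter (fun v => p ≤ v.val)).card = n - p := by
  have h1 := Finset.card_filter_add_card_filter_not
    (s := (univ : Finset (Fin n))) (p := fun v => v.val < p)
  have h2 : ((univ : Finset (Fin n)).filter (fun v => ¬ v.val < p))
      = (univ : Finset (Fin n)).filter (fun v => p ≤ v.val) := by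
    apply Finset.filter_congr; intro x _; simp [not_lt]
  rw [card_filter_lt p n hpn, h2] at h1
  simp only [Finset.card_univ, Fintype.card_fin] at h1
  omega

lemma deg_low (p n : ℕ) (hpn : p ≤ n) (v : Fin n) (hv : v.val < p) :
    (joinEK p n).degree v = n - p := by
  rw [← SimpleGraph.card_neighborFinset_eq_degree, SimpleGraph.neighborFinset_eq_filter]
  rw [← card_filter_ge p n hpn]
  congr 1
  apply Finset.filter_congr; intro w _
  rw [joinEK_adj]
  constructor
  · rintro ⟨hne, h | h⟩
    · omega
    · exact h
  · intro h; exact ⟨fun he => by subst he; omega, Or.inr h⟩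

lemma deg_high (p n : ℕ) (v : Fin n) (hv : p ≤ v.val) :
    (joinEK p n).degree v = n - 1 := by
  rw [← SimpleGraph.card_neighborFinset_eq_degree, SimpleGraph.neighborFinset_eq_filter]
  have h2 : ((univ : Finset (Fin n)).filter ((joinEK p n).Adj v)) = univ.erase v := by
    ext w; simp only [Finset.mem_filter, Finset.mem_univ, true_and, Finset.mem_erase]
    rw [joinEK_adj]
    constructor
    · rintro ⟨hne, _⟩; exact ⟨fun he => hne he.symm, trivial⟩
    · rintro ⟨hne, _⟩; exact ⟨fun he => hne he.symm, Or.inl hv⟩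
  rw [h2, Finset.card_erase_of_mem (Finset.mem_univ v), Finset.card_univ, Fintype.card_fin]

lemma degMultiset_joinEK (p n : ℕ) (hpn : p ≤ n) :
    (Finset.univ.val.map (fun v => (joinEK p n).degree v))
      = ↑(List.replicate p (n - p) ++ List.replicate (n - p) (n - 1)) := by
  have hsplit := Multiset.filter_add_not (fun v : Fin n => v.val < p) (univ : Finset (Fin n)).val
  rw [← hsplit, Multiset.map_add]
  have hc1 : Multiset.card (Multiset.filter (fun v : Fin n => v.val < p) univ.val) = p := by
    have := card_filter_lt p n hpn
    rwa [Finset.card, Finset.filter_val] at this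
  have hc2 : Multiset.card (Multiset.filter (fun v : Fin n => ¬ v.val < p) univ.val) = n - p := by
    have h2' : ((univ : Finset (Fin n)).filter (fun v => ¬ v.val < p)).card = n - p := by
      rw [← card_filter_ge p n hpn]
      congr 1
      apply Finset.filter_congr; intro x _; simp [not_lt]
    rwa [Finset.card, Finset.filter_val] at h2'
  have h1 : (Multiset.filter (fun v : Fin n => v.val < p) univ.val).map
      (fun v => (joinEK p n).degree v) = Multiset.replicate p (n - p) := by
    have he := Multiset.map_congr (f := fun v : Fin n => (joinEK p n).degree v)
      (g := fun _ => n - p)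
      (rfl : Multiset.filter (fun v : Fin n => v.val < p) univ.val = _) (fun x hx => by
        rw [Multiset.mem_filter] at hx
        exact deg_low p n hpn x hx.2)
    rw [he, Multiset.map_const', hc1]
  have h2 : (Multiset.filter (fun v : Fin n => ¬ v.val < p) univ.val).map
      (fun v => (joinEK p n).degree v) = Multiset.replicate (n - p) (n - 1) := by
    have he := Multiset.map_congr (f := fun v : Fin n => (joinEK p n).degree v)
      (g := fun _ => n - 1)
      (rfl : Multiset.filter (fun v : Fin n => ¬ v.val < p) univ.val = _) (fun x hx => by
        rw [Multiset.mem_filter] at hx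
        exact deg_high p n x (not_lt.mp hx.2))
    rw [he, Multiset.map_const', hc2]
  rw [h1, h2, ← Multiset.coe_add, Multiset.coe_replicate, Multiset.coe_replicate]


lemma dseq_joinEK (p n : ℕ) (hpn : p ≤ n) :
    DSI.dseq (joinEK p n) = List.replicate p (n - p) ++ List.replicate (n - p) (n - 1) := by
  have hM := degMultiset_joinEK p n hpn
  have hsorted : List.Pairwise (· ≤ ·)
      (List.replicate p (n - p) ++ List.replicate (n - p) (n - 1)) := by
    rw [List.pairwise_append]
    refine ⟨by simp, by simp, ?_⟩
    intro x hx y hy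
    have hp0 := List.mem_replicate.mp hx
    rw [List.eq_of_mem_replicate hx, List.eq_of_mem_replicate hy]
    omega
  refine List.Perm.eq_of_pairwise' (Multiset.pairwise_sort _ _) hsorted (Multiset.coe_eq_coe.mp ?_)
  rw [DSI.dseq, Multiset.sort_eq, hM]

lemma sumSmallest_joinEK (p n k : ℕ) (hpn : p ≤ n) (hpk : p ≤ k) (hkn : k ≤ n) :
    DSI.sumSmallest (joinEK p n) k = p * (n - p) + (k - p) * (n - 1) := by
  rw [DSI.sumSmallest, dseq_joinEK p n hpn, List.take_append,
    List.take_replicate, List.take_replicate, List.length_replicate]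
  rw [min_eq_right hpk, min_eq_left (by omega : k - p ≤ n - p)]
  simp [List.sum_replicate, mul_comm]

lemma esize_joinEK (p n : ℕ) (hpn : p ≤ n) :
    2 * DSI.esize (joinEK p n) = p * (n - p) + (n - p) * (n - 1) := by
  have hh := SimpleGraph.sum_degrees_eq_twice_card_edges (joinEK p n)
  rw [DSI.esize, ← hh, Finset.sum]
  rw [degMultiset_joinEK p n hpn]
  rw [Multiset.sum_coe]
  simp [List.sum_replicate, mul_comm]

theorem joinEK_alpha_lt_annihilation (p n : ℕ) (hp : 0 < p) (h : 2 * p + 3 < n) :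
    DSI.alpha (joinEK p n) = p ∧
    (p : ℚ) < ((n : ℚ) - 3) / 2 ∧
    ((n : ℚ) - 3) / 2 < (DSI.annihilation (joinEK p n) : ℚ) ∧
    DSI.alpha (joinEK p n) < DSI.annihilation (joinEK p n) := by
  have hn6 : 6 ≤ n := by omega
  have hpn : p ≤ n := by omega
  -- independence number
  have hIndep : DSI.IndepSet (joinEK p n)
      ((univ : Finset (Fin n)).filter (fun v => v.val < p)) := by
    intro v hv w hw hadj
    rw [joinEK_adj] at hadj
    simp only [Finset.mem_filter] at hv hw
    omega
  have hub : ∀ k ∈ {k | ∃ I : Finset (Fin n), DSI.IndepSet (joinEK p n) I ∧ I.card = k},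
      k ≤ p := by
    rintro k ⟨I, hI, rfl⟩
    by_cases hex : ∃ v ∈ I, p ≤ v.val
    · obtain ⟨v, hv, hpv⟩ := hex
      have hsub : I ⊆ {v} := by
        intro w hw
        simp only [Finset.mem_singleton]
        by_contra hne
        exact hI v hv w hw ((joinEK_adj p n v w).mpr ⟨fun h => hne h.symm, Or.inl hpv⟩)
      have := Finset.card_le_card hsub
      simp only [Finset.card_singleton] at this
      omega
    · push_neg at hex
      have hsub : I ⊆ (univ : Finset (Fin n)).filter (fun v => v.val < p) := by
        intro w hw
        simp only [Finset.mem_filter, Finset.mem_univ, true_and]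
        exact hex w hw
      have := Finset.card_le_card hsub
      rwa [card_filter_lt p n hpn] at this
  have hmemα : p ∈ {k | ∃ I : Finset (Fin n), DSI.IndepSet (joinEK p n) I ∧ I.card = k} :=
    ⟨_, hIndep, card_filter_lt p n hpn⟩
  have halpha : DSI.alpha (joinEK p n) = p := by
    rw [DSI.alpha]
    exact le_antisymm (csSup_le ⟨p, hmemα⟩ hub) (le_csSup ⟨p, hub⟩ hmemα)
  -- annihilation number
  set k := (n - 1) / 2 with hk
  have hpk : p ≤ k := by omega
  have hkn : k ≤ n := by omega
  have hAmem : k ∈ {k | k ≤ Fintype.card (Fin n) ∧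
      DSI.sumSmallest (joinEK p n) k ≤ DSI.esize (joinEK p n)} := by
    constructor
    · rw [Fintype.card_fin]; omega
    · have h2e := esize_joinEK p n hpn
      have hss := sumSmallest_joinEK p n k hpn hpk hkn
      have key : 2 * (p * (n - p) + (k - p) * (n - 1)) ≤ p * (n - p) + (n - p) * (n - 1) := by
        have hb : 2 * (k - p) + 2 * p + 1 ≤ n := by omega
        zify [hpn, hpk, (by omega : 1 ≤ n)] at hb ⊢
        nlinarith [mul_nonneg (by linarith : (0:ℤ) ≤ (n:ℤ) - 1 - 2*((k:ℤ) - (p:ℤ)) - 2*(p:ℤ))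
            (by linarith [(by exact_mod_cast hn6 : (6:ℤ) ≤ (n:ℤ))] : (0:ℤ) ≤ (n:ℤ) - 1),
          mul_nonneg (by positivity : (0:ℤ) ≤ (p:ℤ))
            (by linarith [(by exact_mod_cast hp : (1:ℤ) ≤ (p:ℤ))] : (0:ℤ) ≤ (p:ℤ) - 1)]
      omega
  have hAbdd : BddAbove {k | k ≤ Fintype.card (Fin n) ∧
      DSI.sumSmallest (joinEK p n) k ≤ DSI.esize (joinEK p n)} :=
    ⟨Fintype.card (Fin n), fun x hx => hx.1⟩
  have hA : k ≤ DSI.annihilation (joinEK p n) := by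
    rw [DSI.annihilation]
    exact le_csSup hAbdd hAmem
  have hA2 : n ≤ 2 * DSI.annihilation (joinEK p n) + 2 := by omega
  refine ⟨halpha, ?_, ?_, ?_⟩
  · rw [lt_div_iff₀ (by norm_num : (0:ℚ) < 2)]
    have : ((2 * p + 3 : ℕ) : ℚ) < ((n : ℕ) : ℚ) := by exact_mod_cast h
    push_cast at this ⊢
    linarith
  · rw [div_lt_iff₀ (by norm_num : (0:ℚ) < 2)]
    have : ((n : ℕ) : ℚ) ≤ ((2 * DSI.annihilation (joinEK p n) + 2 : ℕ) : ℚ) := by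
      exact_mod_cast hA2
    push_cast at this ⊢
    linarith
  · rw [halpha]
    omega
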